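/- Let H be the graph on ZMod 16 in which i and j are adjacent if and only if their circular distance (the minimum of (i−j) mod 16 and (j−i) mod 16) is between 1 and 4 (i.e., H is the fourth power of the 16-cycle). Then the map β(i) = i mod 8 is a proper 8-colouring of H, and moreover every colour of Fin 8 appears in the closed neighbourhood of every vertex of H under β, so β is a frozen 8-colouring of H. -/

import Mathlib

/-- The 8-colouring `β` given by `β i = i mod 8`. -/
def β16 : ZMod 16 → Fin 8 := fun i => Fin.ofNat 8 i.val

/-- The fourth power of the 16-cycle: `i` and `j` are adjacent iff their circular distance
is between `1` and `4`. -/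
def H16 : SimpleGraph (ZMod 16) where
  Adj i j := 1 ≤ min (i - j).val (j - i).val ∧ min (i - j).val (j - i).val ≤ 4
  symm := by
    constructor
    rintro i j ⟨h1, h2⟩
    exact ⟨by rwa [min_comm], by rwa [min_comm]⟩
  loopless := by
    constructor
    intro i h
    rw [sub_self] at h
    simp [ZMod.val_zero] at h

instance : DecidableRel H16.Adj := fun i j => by unfold H16; exact instDecidableAnd

/-- `β16` is a proper 8-colouring of `H16`, and every colour appears in the closed
neighbourhood of every vertex, i.e. `β16` is a frozen 8-colouring of `H16`. -/
theorem statement16 :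
    (∀ i j : ZMod 16, H16.Adj i j → β16 i ≠ β16 j) ∧
    (∀ (v : ZMod 16) (c : Fin 8), ∃ u : ZMod 16, (u = v ∨ H16.Adj u v) ∧ β16 u = c) := by
  decide
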